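/- arXiv:1303.6259 — 3 statements merged into one kernel-verified Lean document; each statement's English description precedes it below -/
import Mathlib

section
/- Let F be a p-adic field of odd residual characteristic and let c̃ be a 2-cocycle on GSp_{2n}(F) valued in {±1} whose restriction to diagonal matrices satisfies c̃([t,y],[t',y']) = (det t, y' det t')_F, where [t,y] = diag(t, y t^{-1}) for t ∈ GL_n(F) diagonal and y ∈ F^*. Then the center of the double cover T̃' of the diagonal torus T'(F) of GSp_{2n}(F) defined by this cocycle is {([t,y], ε) : y ∈ (F^*)^2 and det t ∈ (F^*)^2}. -/
/-- Multiplication on the double cover `T̃'` of the diagonal torus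
`T'(F) = {[t,y] = diag(t, y t⁻¹)}` of `GSp_{2n}(F)`, given by the cocycle
`c̃([t,y],[t',y']) = (det t, y' det t')_F`.  An element is a triple `(t, y, ε)`. -/
noncomputable def torusCovMul {F : Type*} [Field F] {n : ℕ} (hilb : Fˣ → Fˣ → ℤˣ)
    (p q : (Fin n → Fˣ) × Fˣ × ℤˣ) : (Fin n → Fˣ) × Fˣ × ℤˣ :=
  (p.1 * q.1, p.2.1 * q.2.1,
    p.2.2 * q.2.2 * hilb (∏ i, p.1 i) (q.2.1 * ∏ i, q.1 i))

/-- The center of the double cover `T̃'` of the diagonal torus of `GSp_{2n}(F)` is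
`{([t,y], ε) : y ∈ (F^*)² and det t ∈ (F^*)²}`. -/
theorem stmt_12 (F : Type*) [Field F] (n : ℕ) (hn : 0 < n)
    (hilb : Fˣ → Fˣ → ℤˣ)
    (hsymm : ∀ a b, hilb a b = hilb b a)
    (hmul1 : ∀ a b c, hilb (a * b) c = hilb a c * hilb b c)
    (hmul2 : ∀ a b c, hilb a (b * c) = hilb a b * hilb a c)
    (hnd : ∀ a, (∀ b, hilb a b = 1) ↔ IsSquare a) :
    {p : (Fin n → Fˣ) × Fˣ × ℤˣ |
        ∀ q, torusCovMul hilb p q = torusCovMul hilb q p}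
      = {p : (Fin n → Fˣ) × Fˣ × ℤˣ | IsSquare p.2.1 ∧ IsSquare (∏ i, p.1 i)} := by
  have hone : ∀ c, hilb 1 c = 1 := by
    intro c
    have := hmul1 1 1 c
    simp at this
    exact this
  have hone' : ∀ c, hilb c 1 = 1 := fun c => (hsymm c 1).trans (hone c)
  -- an element with prescribed product
  set j : Fin n := ⟨0, hn⟩
  have hprod : ∀ b : Fˣ, (∏ i, Function.update (1 : Fin n → Fˣ) j b i) = b := by
    intro b
    rw [Finset.prod_update_of_mem (Finset.mem_univ j)]
    simp
  ext p
  obtain ⟨t, y, ε⟩ := p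
  simp only [Set.mem_setOf_eq]
  set a := ∏ i, t i with ha
  constructor
  · intro h
    have key : ∀ b z : Fˣ, hilb a (z * b) = hilb b (y * a) := by
      intro b z
      have := congrArg (fun r => r.2.2) (h ⟨Function.update 1 j b, z, 1⟩)
      simp only [torusCovMul, hprod b] at this
      rw [mul_one, one_mul] at this
      exact mul_left_cancel this
    have hasq : IsSquare a := by
      rw [← hnd]
      intro z
      have := key 1 z
      rwa [mul_one, hone] at this
    refine ⟨?_, hasq⟩
    rw [← hnd]
    intro b
    have h1 := key b 1
    rw [one_mul, hmul2] at h1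
    have h2 : hilb a b = 1 := ((hnd a).mpr hasq) b
    have h3 : hilb b a = 1 := (hsymm b a).trans h2
    rw [h2, h3, mul_one] at h1
    exact (hsymm y b).trans h1.symm
  · rintro ⟨hy, ha2⟩ q
    have h1 : ∀ c, hilb a c = 1 := (hnd a).mpr ha2
    have h2 : ∀ c, hilb y c = 1 := (hnd y).mpr hy
    have h3 : ∀ c, hilb c a = 1 := fun c => (hsymm c a).trans (h1 c)
    have h4 : ∀ c, hilb c y = 1 := fun c => (hsymm c y).trans (h2 c)
    simp only [torusCovMul, ← ha]
    refine Prod.ext (mul_comm _ _) (Prod.ext (mul_comm _ _) ?_)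
    simp [h1, hmul2, h3, h4, mul_comm]
end

section
/- With the cocycle c̃ on GSp_{2n}(F) satisfying c̃(i(F^*), GSp_{2n}(F)) = 1 and (aI_{2n}, ε)^{(g,ε')} = (aI_{2n}, ε·(λ(g), a^n)_F): the center of the double cover of GSp_{2n}(F) is the inverse image of F^* I_{2n} if n is even, and the inverse image of (F^*)^2 I_{2n} if n is odd. -/
/-- Multiplication on the double cover of `GSp_{2n}(F)` defined by a cocycle `cc`. -/
def gspCovMul {B : Type*} [Group B] (cc : B → B → ℤˣ) (p q : B × ℤˣ) : B × ℤˣ :=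
  (p.1 * q.1, p.2 * q.2 * cc p.1 q.1)

lemma odd_pow_isSquare_iff {G : Type*} [CommGroup G] {n : ℕ} (hn : Odd n) (a : G) :
    IsSquare (a ^ n) ↔ IsSquare a := by
  obtain ⟨m, rfl⟩ := hn
  have hpow : a ^ (2 * m + 1) = a ^ m * a ^ m * a := by
    rw [two_mul, pow_add, pow_add, pow_one]
  constructor
  · rintro ⟨c, hc⟩
    rw [hpow] at hc
    refine ⟨(a ^ m)⁻¹ * c, ?_⟩
    calc a = (a ^ m * a ^ m)⁻¹ * (a ^ m * a ^ m * a) := by group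
      _ = (a ^ m * a ^ m)⁻¹ * (c * c) := by rw [hc]
      _ = (a ^ m)⁻¹ * c * ((a ^ m)⁻¹ * c) := by
          simp [mul_inv, mul_assoc, mul_comm, mul_left_comm]
  · rintro ⟨c, rfl⟩
    refine ⟨(c * c) ^ m * c, ?_⟩
    rw [two_mul, pow_add, pow_add, pow_one]
    simp [mul_pow, mul_assoc, mul_comm, mul_left_comm]

/-- The center of the metaplectic double cover of `GSp_{2n}(F)` is the inverse image
of the scalars `F^* I_{2n}` when `n` is even, and of `(F^*)² I_{2n}` when `n` is odd.
Here `B` plays the role of `GSp_{2n}(F)`, `lam` is the similitude character,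
`z : Fˣ →* B` the embedding of the scalar matrices (whose range is the center of `B`),
and `cc` the 2-cocycle, satisfying the commutation rule
`cc(aI, g) · cc(g, aI) = (λ(g), aⁿ)_F`. -/
theorem stmt_14 (F : Type*) [Field F] (B : Type*) [Group B] (n : ℕ)
    (hilb : Fˣ → Fˣ → ℤˣ)
    (hmul2 : ∀ a b c, hilb a (b * c) = hilb a b * hilb a c)
    (hnd : ∀ a, (∀ b, hilb b a = 1) ↔ IsSquare a)
    (lam : B →* Fˣ) (hlam : Function.Surjective lam)
    (z : Fˣ →* B) (hz : Subgroup.center B = z.range)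
    (cc : B → B → ℤˣ)
    (hconj : ∀ (a : Fˣ) (g : B), cc (z a) g * cc g (z a) = hilb (lam g) (a ^ n)) :
    (Even n →
      {p : B × ℤˣ | ∀ q, gspCovMul cc p q = gspCovMul cc q p}
        = {p : B × ℤˣ | ∃ a : Fˣ, p.1 = z a}) ∧
    (Odd n →
      {p : B × ℤˣ | ∀ q, gspCovMul cc p q = gspCovMul cc q p}
        = {p : B × ℤˣ | ∃ a : Fˣ, p.1 = z a ∧ IsSquare a}) := by
  -- key characterization
  have key : ∀ p : B × ℤˣ,
      (∀ q, gspCovMul cc p q = gspCovMul cc q p) ↔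
        ∃ a : Fˣ, p.1 = z a ∧ IsSquare (a ^ n) := by
    intro p
    constructor
    · intro h
      have hcen : p.1 ∈ Subgroup.center B := by
        rw [Subgroup.mem_center_iff]
        intro g
        have := congrArg Prod.fst (h (g, 1))
        simpa [gspCovMul] using this.symm
      rw [hz] at hcen
      obtain ⟨a, ha⟩ := hcen
      refine ⟨a, ha.symm, ?_⟩
      rw [← hnd]
      intro b
      obtain ⟨g, rfl⟩ := hlam b
      have h2 := congrArg Prod.snd (h (g, 1))
      simp only [gspCovMul] at h2
      have hcc : cc p.1 g = cc g p.1 := by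
        have := h2
        simp only [mul_one, one_mul] at this
        exact mul_left_cancel this
      rw [← hconj a g, ha, hcc]
      exact Int.units_mul_self _
    · rintro ⟨a, hpa, hsq⟩
      intro q
      have hza : z a ∈ Subgroup.center B := hz ▸ ⟨a, rfl⟩
      have hcomm : p.1 * q.1 = q.1 * p.1 := by
        rw [hpa]; exact (Subgroup.mem_center_iff.mp hza q.1).symm
      have hone : ∀ b, hilb b (a ^ n) = 1 := (hnd _).mpr hsq
      have hcc : cc p.1 q.1 = cc q.1 p.1 := by
        have h1 : cc (z a) q.1 * cc q.1 (z a) = 1 := by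
          rw [hconj]; exact hone _
        have := Int.units_mul_self (cc q.1 (z a))
        rw [hpa]
        calc cc (z a) q.1 = cc (z a) q.1 * (cc q.1 (z a) * cc q.1 (z a)) := by
              rw [this, mul_one]
          _ = (cc (z a) q.1 * cc q.1 (z a)) * cc q.1 (z a) := by rw [mul_assoc]
          _ = cc q.1 (z a) := by rw [h1, one_mul]
      simp only [gspCovMul, Prod.mk.injEq]
      exact ⟨hcomm, by rw [mul_comm p.2 q.2, hcc]⟩
  constructor
  · intro hn
    ext p
    simp only [Set.mem_setOf_eq, key p]
    exact ⟨fun ⟨a, ha, _⟩ => ⟨a, ha⟩, fun ⟨a, ha⟩ => ⟨a, ha, hn.isSquare_pow a⟩⟩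
  · intro hn
    ext p
    simp only [Set.mem_setOf_eq, key p]
    constructor
    · rintro ⟨a, ha, hsq⟩
      exact ⟨a, ha, (odd_pow_isSquare_iff hn a).mp hsq⟩
    · rintro ⟨a, ha, hsq⟩
      exact ⟨a, ha, (odd_pow_isSquare_iff hn a).mpr hsq⟩
end

section
/- With the two splittings ι^η of the metaplectic cover over K = GSp_{2n}(O) (indexed by the two quadratic characters η of O^*): if n is odd, the two images of K inside the metaplectic group are conjugate (indeed by (πI_{2n},1), since (k,ε)^{(πI_{2n},1)} = (k, ε(λ(k),π)_F) and (λ(k),π^n)_F = η_π(λ(k)) for n odd); if n is even, they are not conjugate. -/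
/-- The two splittings of the metaplectic cover over `K = GSp_{2n}(O)` are conjugate
in the cover if and only if `n` is odd.  Here `B = GSp_{2n}(F)` with similitude `lam`,
`zscal : Fˣ →* B` the central scalar matrices `a ↦ aI_{2n}`, `Gt` the metaplectic
double cover with projection `pr` and central kernel `{1, z}`, conjugation by a lift of
`aI_{2n}` acting by `x ↦ x · z^{[(λ(pr x), aⁿ)_F = -1]}`, normalizer of `K` in `B`
contained in `Z(B)·K` (Cartan), and `s₁, s₂` the two splittings of the cover over `K`,
related by `s₂(k) = s₁(k) z^{[(λ(k),π)_F = -1]}` (`η_π = (·, π)_F`). -/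
theorem stmt_16 (F : Type*) [Field F] (B : Type*) [Group B] (n : ℕ)
    (hilb : Fˣ → Fˣ → ℤˣ)
    (hmul2 : ∀ a b c, hilb a (b * c) = hilb a b * hilb a c)
    (lam : B →* Fˣ) (π : Fˣ)
    (zscal : Fˣ →* B) (hzc : ∀ (a : Fˣ) (b : B), zscal a * b = b * zscal a)
    (Gt : Type*) [Group Gt] (pr : Gt →* B) (hpr : Function.Surjective pr)
    (z : Gt) (hzcen : ∀ x : Gt, z * x = x * z) (hz2 : z * z = 1) (hzne : z ≠ 1)
    (hker : ∀ x : Gt, pr x = 1 ↔ x = 1 ∨ x = z)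
    (K : Subgroup B)
    -- Cartan: the normalizer of `K` is `Z(B)·K`
    (hnorm : ∀ b : B, (∀ k ∈ K, b⁻¹ * k * b ∈ K) →
      ∃ a : Fˣ, ∃ k₀ ∈ K, b = zscal a * k₀)
    -- conjugation by a lift of a central element `aI_{2n}`
    (hconj : ∀ (g : Gt) (a : Fˣ), pr g = zscal a → ∀ x : Gt,
      g⁻¹ * x * g = if hilb (lam (pr x)) (a ^ n) = 1 then x else x * z)
    -- the two splittings over `K`
    (s₁ s₂ : ↥K →* Gt)
    (hs₁ : ∀ k : ↥K, pr (s₁ k) = (k : B)) (hs₂ : ∀ k : ↥K, pr (s₂ k) = (k : B))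
    (hrel : ∀ k : ↥K,
      s₂ k = if hilb (lam (k : B)) π = 1 then s₁ k else s₁ k * z)
    (hne : s₁ ≠ s₂) :
    (Odd n → ∃ g : Gt, ∀ k : ↥K, g⁻¹ * s₁ k * g = s₂ k) ∧
    (Even n → ¬ ∃ g : Gt, ∀ k : ↥K, g⁻¹ * s₁ k * g = s₂ k) := by

  have hone : ∀ a : Fˣ, hilb a 1 = 1 := by
    intro a
    have h1 := hmul2 a 1 1
    rw [one_mul] at h1
    exact (left_eq_mul.mp h1)
  have hpow : ∀ (a b : Fˣ) (m : ℕ), hilb a (b ^ m) = (hilb a b) ^ m := by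
    intro a b m
    induction m with
    | zero => simp [hone]
    | succ m ih => rw [pow_succ, hmul2, ih, pow_succ]
  constructor
  · rintro ⟨m, hm⟩
    obtain ⟨g, hg⟩ := hpr (zscal π)
    refine ⟨g, fun k => ?_⟩
    have hc := hconj g π hg (s₁ k)
    rw [hs₁] at hc
    have hp : hilb (lam (k : B)) (π ^ n) = hilb (lam (k : B)) π := by
      rw [hpow, hm, pow_add, pow_mul, Int.units_sq, one_pow, one_mul, pow_one]
    rw [hc, hp, hrel k]
  · rintro ⟨m, hm⟩ ⟨g, hg⟩
    have hnormg : ∀ k ∈ K, (pr g)⁻¹ * k * (pr g) ∈ K := by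
      intro k hk
      have h1 : pr (g⁻¹ * s₁ ⟨k, hk⟩ * g) = pr (s₂ ⟨k, hk⟩) := by rw [hg ⟨k, hk⟩]
      rw [map_mul, map_mul, map_inv, hs₁, hs₂] at h1
      rw [h1]
      exact hk
    obtain ⟨a, k₀, hk₀, hb⟩ := hnorm (pr g) hnormg
    set kk : ↥K := ⟨k₀, hk₀⟩ with hkk
    set h : Gt := s₁ kk with hh
    set g₀ : Gt := g * h⁻¹ with hg₀
    have hprg₀ : pr g₀ = zscal a := by
      rw [hg₀, map_mul, map_inv, hh, hs₁, hb]
      simp [hkk]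
    have hkey : ∀ k : ↥K, s₂ k = s₁ (kk⁻¹ * k * kk) := by
      intro k
      have hc := hconj g₀ a hprg₀ (s₁ k)
      rw [hs₁] at hc
      have hev : hilb (lam (k : B)) (a ^ n) = 1 := by
        rw [hpow, hm, ← two_mul, pow_mul, Int.units_sq, one_pow]
      rw [hev, if_pos rfl] at hc
      have hgfact : g = g₀ * h := by rw [hg₀]; group
      calc s₂ k = g⁻¹ * s₁ k * g := (hg k).symm
        _ = h⁻¹ * (g₀⁻¹ * s₁ k * g₀) * h := by rw [hgfact]; group
        _ = h⁻¹ * s₁ k * h := by rw [hc]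
        _ = s₁ (kk⁻¹ * k * kk) := by rw [map_mul, map_mul, map_inv]
    have hfix : ∀ k : ↥K, (kk⁻¹ * k * kk : ↥K) = k := by
      intro k
      have h1 : pr (s₂ k) = pr (s₁ (kk⁻¹ * k * kk)) := by rw [hkey k]
      rw [hs₁, hs₂] at h1
      exact Subtype.ext h1.symm
    apply hne
    ext k
    rw [hkey k, hfix k]
end
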